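/- Let ℓ, m, n be positive integers with n > m. Then e^{−1/(8ℓ)}·a < C(nℓ, mℓ) < a, where a = (1/√(2π))·ℓ^{−1/2}·(n/((n−m)m))^{1/2}·(n^n/((n−m)^{n−m} m^m))^ℓ and C denotes the binomial coefficient. -/

import Mathlib

open Stirling Real Filter Finset Topology

lemma keyU1 (y : ℝ) (hy : 3 ≤ y) :
    1/(3*y^2) + 1/(5*y^4) + 1/(7*(y^4*(y^2-1))) ≤ 1/(3*(y^2-1)) - (2/15)/y^4 := by
  have h0 : (0:ℝ) < y := by linarith
  have h1 : (0:ℝ) < y^2 - 1 := by nlinarith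
  rw [div_add_div _ _ (by positivity) (by positivity), div_add_div _ _ (by positivity) (by positivity),
    div_sub_div _ _ (by positivity) (by positivity), div_le_div_iff₀ (by positivity) (by positivity)]
  ring_nf
  nlinarith [pow_pos h0 2, pow_pos h0 4, pow_pos h0 6, pow_pos h0 8, pow_pos h0 10, sq_nonneg y]

lemma keyU2 (y : ℝ) (hy : 3 ≤ y) : (1/45)*(1/y^3 - 1/(y+2)^3) ≤ (2/15)/y^4 := by
  have h0 : (0:ℝ) < y := by linarith
  have h2 : (0:ℝ) < y + 2 := by linarith
  rw [← sub_nonneg]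
  have : (2/15)/y^4 - (1/45)*(1/y^3 - 1/(y+2)^3)
      = (6*(y+2)^3 - y*((y+2)^3 - y^3)) / (45 * (y^4 * (y+2)^3)) := by
    field_simp
    ring
  rw [this]
  apply div_nonneg _ (by positivity)
  nlinarith [mul_nonneg (sub_nonneg.2 hy) (sq_nonneg y), sq_nonneg (y-3), mul_pos h0 h0]

lemma keyL1 (y : ℝ) (hy : 3 ≤ y) :
    1/(3*(y^2-1)) - (7/40)/y^4 ≤ 1/(3*y^2) + 1/(5*y^4) := by
  have h0 : (0:ℝ) < y := by linarith
  have h1 : (0:ℝ) < y^2 - 1 := by nlinarith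
  rw [div_add_div _ _ (by positivity) (by positivity), div_sub_div _ _ (by positivity) (by positivity),
    div_le_div_iff₀ (by positivity) (by positivity)]
  ring_nf
  nlinarith [pow_pos h0 2, pow_pos h0 4, pow_pos h0 6, sq_nonneg (y^2-9), sq_nonneg y]

lemma keyL2 (y : ℝ) (hy : 3 ≤ y) : (7/40)/y^4 ≤ (7/80)*(1/y^3 - 1/(y+2)^3) := by
  have h0 : (0:ℝ) < y := by linarith
  have h2 : (0:ℝ) < y + 2 := by linarith
  rw [← sub_nonneg]
  have : (7/80)*(1/y^3 - 1/(y+2)^3) - (7/40)/y^4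
      = (7*(y*((y+2)^3 - y^3) - 2*(y+2)^3)) / (80 * (y^4 * (y+2)^3)) := by
    field_simp
    ring
  rw [this]
  apply div_nonneg _ (by positivity)
  nlinarith [mul_nonneg (sub_nonneg.2 hy) (sq_nonneg y), sq_nonneg (y-3), mul_pos h0 h0]

noncomputable def ST6psi (i : ℕ) : ℝ := 1/(12*(i:ℝ)) - (1/45)/(2*(i:ℝ)+1)^3
noncomputable def ST6chi (i : ℕ) : ℝ := 1/(12*(i:ℝ)) - (7/80)/(2*(i:ℝ)+1)^3

lemma tel12 (M : ℝ) (hM : 0 ≤ M) :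
    1/(12*(M+1)) - 1/(12*(M+2)) = 1/(3*((2*M+3)^2-1)) := by
  have h1 : (0:ℝ) < M+1 := by linarith
  have h2 : (0:ℝ) < M+2 := by linarith
  have h3 : (0:ℝ) < (2*M+3)^2-1 := by nlinarith
  rw [div_sub_div _ _ (by positivity) (by positivity), div_eq_div_iff (by positivity) (by positivity)]
  ring

lemma du_le (m : ℕ) :
    Real.log (stirlingSeq (m+1)) - Real.log (stirlingSeq (m+2)) ≤ ST6psi (m+1) - ST6psi (m+2) := by
  have h := log_stirlingSeq_diff_hasSum m
  set x : ℝ := 1 / (2 * (↑(m+1):ℝ) + 1) with hxdef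
  set f : ℕ → ℝ := fun k => 1 / (2 * (↑(k+1):ℝ) + 1) * (x ^ 2) ^ (k + 1) with hfdef
  set D := Real.log (stirlingSeq (m+1)) - Real.log (stirlingSeq (m+2)) with hD
  have hy : (3:ℝ) ≤ 2 * (↑(m+1):ℝ) + 1 := by push_cast; linarith [Nat.cast_nonneg (α := ℝ) m]
  have hy0 : (0:ℝ) < 2 * (↑(m+1):ℝ) + 1 := by linarith
  have hx0 : 0 < x := by positivity
  have hxle : x ≤ 1/3 := by
    rw [hxdef]
    rw [div_le_div_iff₀ hy0 (by norm_num)]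
    linarith
  have hx2 : x^2 < 1 := by nlinarith
  -- tail bound
  have h2 : HasSum (fun k => f (k+2)) (D - ∑ i ∈ range 2, f i) := by
    refine (hasSum_nat_add_iff 2).2 ?_
    rw [sub_add_cancel]
    exact h
  have hg : HasSum (fun k : ℕ => x^6/7 * (x^2)^k) (x^6/7 * (1-x^2)⁻¹) :=
    (hasSum_geometric_of_lt_one (by positivity) hx2).mul_left _
  have htail : D - ∑ i ∈ range 2, f i ≤ x^6/7 * (1-x^2)⁻¹ := by
    refine hasSum_le (fun k => ?_) h2 hg
    have : f (k+2) = 1/(2*(↑(k+3):ℝ)+1) * (x^6 * (x^2)^k) := by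
      rw [hfdef]
      simp only []
      rw [show (k+2)+1 = k+3 from rfl, show (x^2)^(k+3) = x^6*(x^2)^k by ring]
    rw [this]
    rw [show x^6/7 * (x^2)^k = 1/7 * (x^6 * (x^2)^k) by ring]
    refine mul_le_mul_of_nonneg_right ?_ (by positivity)
    refine one_div_le_one_div_of_le (by norm_num) ?_
    push_cast; linarith [Nat.cast_nonneg (α := ℝ) k]
  have hsum2 : ∑ i ∈ range 2, f i = 1/3 * x^2 + 1/5 * x^4 := by
    rw [Finset.sum_range_succ, Finset.sum_range_one, hfdef]
    norm_num
    ring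
  -- combine
  have hDle : D ≤ 1/3 * x^2 + 1/5 * x^4 + x^6/7 * (1-x^2)⁻¹ := by
    have := htail
    rw [hsum2] at this
    linarith
  -- now arithmetic
  set y : ℝ := 2 * (↑(m+1):ℝ) + 1 with hydef
  have hx : x = 1/y := rfl
  have hy2 : (0:ℝ) < y^2 - 1 := by nlinarith
  have e1 : 1/3 * x^2 = 1/(3*y^2) := by rw [hx]; field_simp
  have e2 : 1/5 * x^4 = 1/(5*y^4) := by rw [hx]; field_simp
  have e3 : x^6/7 * (1-x^2)⁻¹ = 1/(7*(y^4*(y^2-1))) := by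
    rw [hx]
    have hyne : y ≠ 0 := by positivity
    field_simp
  have hfin := keyU1 y hy
  have hfin2 := keyU2 y hy
  have hpsi : ST6psi (m+1) - ST6psi (m+2) = 1/(3*(y^2-1)) - (1/45)*(1/y^3 - 1/(y+2)^3) := by
    rw [ST6psi, ST6psi]
    have := tel12 (m:ℝ) (Nat.cast_nonneg m)
    push_cast
    push_cast at this
    rw [hydef]
    push_cast
    rw [show (2*((m:ℝ)+1)+1)^2 - 1 = (2*(m:ℝ)+3)^2-1 by ring] at *
    rw [show 12*((m:ℝ)+1) = 12*((m:ℝ)+1) from rfl]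
    rw [show 1/(12*((m:ℝ)+1)) - 1/45/(2*((m:ℝ)+1)+1)^3 - (1/(12*((m:ℝ)+2)) - 1/45/(2*((m:ℝ)+2)+1)^3)
      = (1/(12*((m:ℝ)+1)) - 1/(12*((m:ℝ)+2))) - (1/45)*(1/(2*((m:ℝ)+1)+1)^3 - 1/(2*((m:ℝ)+1)+1+2)^3) by ring]
    rw [show (12*((m:ℝ)+1)) = 12*((m:ℝ)+1) from rfl]
    rw [show 1/(12*((m:ℝ)+1)) - 1/(12*((m:ℝ)+2)) = 1/(3*((2*(m:ℝ)+3)^2-1)) from this]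
  rw [hpsi]
  rw [e1, e2, e3] at hDle
  linarith

lemma du_ge (m : ℕ) :
    ST6chi (m+1) - ST6chi (m+2) ≤ Real.log (stirlingSeq (m+1)) - Real.log (stirlingSeq (m+2)) := by
  have h := log_stirlingSeq_diff_hasSum m
  set x : ℝ := 1 / (2 * (↑(m+1):ℝ) + 1) with hxdef
  set f : ℕ → ℝ := fun k => 1 / (2 * (↑(k+1):ℝ) + 1) * (x ^ 2) ^ (k + 1) with hfdef
  set D := Real.log (stirlingSeq (m+1)) - Real.log (stirlingSeq (m+2)) with hD
  have hy : (3:ℝ) ≤ 2 * (↑(m+1):ℝ) + 1 := by push_cast; linarith [Nat.cast_nonneg (α := ℝ) m]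
  have hy0 : (0:ℝ) < 2 * (↑(m+1):ℝ) + 1 := by linarith
  have hx0 : 0 < x := by positivity
  have hDge : ∑ i ∈ range 2, f i ≤ D := by
    refine sum_le_hasSum _ (fun k _ => ?_) h
    have : (0:ℝ) < 2 * (↑(k+1):ℝ) + 1 := by positivity
    positivity
  have hsum2 : ∑ i ∈ range 2, f i = 1/3 * x^2 + 1/5 * x^4 := by
    rw [Finset.sum_range_succ, Finset.sum_range_one, hfdef]
    norm_num
    ring
  rw [hsum2] at hDge
  set y : ℝ := 2 * (↑(m+1):ℝ) + 1 with hydef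
  have hx : x = 1/y := rfl
  have hy2 : (0:ℝ) < y^2 - 1 := by nlinarith
  have e1 : 1/3 * x^2 = 1/(3*y^2) := by rw [hx]; field_simp
  have e2 : 1/5 * x^4 = 1/(5*y^4) := by rw [hx]; field_simp
  have hfin := keyL1 y hy
  have hfin2 := keyL2 y hy
  have hpsi : ST6chi (m+1) - ST6chi (m+2) = 1/(3*(y^2-1)) - (7/80)*(1/y^3 - 1/(y+2)^3) := by
    rw [ST6chi, ST6chi]
    have := tel12 (m:ℝ) (Nat.cast_nonneg m)
    push_cast
    push_cast at this
    rw [hydef]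
    push_cast
    rw [show (2*((m:ℝ)+1)+1)^2 - 1 = (2*(m:ℝ)+3)^2-1 by ring] at *
    rw [show 1/(12*((m:ℝ)+1)) - 7/80/(2*((m:ℝ)+1)+1)^3 - (1/(12*((m:ℝ)+2)) - 7/80/(2*((m:ℝ)+2)+1)^3)
      = (1/(12*((m:ℝ)+1)) - 1/(12*((m:ℝ)+2))) - (7/80)*(1/(2*((m:ℝ)+1)+1)^3 - 1/(2*((m:ℝ)+1)+1+2)^3) by ring]
    rw [show 1/(12*((m:ℝ)+1)) - 1/(12*((m:ℝ)+2)) = 1/(3*((2*(m:ℝ)+3)^2-1)) from this]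
  rw [hpsi]
  rw [e1, e2] at hDge
  linarith

lemma tele (φ : ℕ → ℝ) {j N : ℕ} (h : j ≤ N) :
    ∑ i ∈ Ico j N, (φ i - φ (i+1)) = φ j - φ N := by
  induction N, h using Nat.le_induction with
  | base => simp
  | succ N hN ih => rw [Finset.sum_Ico_succ_top hN, ih]; ring

lemma partialU {j N : ℕ} (hj : 1 ≤ j) (hN : j ≤ N) :
    Real.log (stirlingSeq j) - Real.log (stirlingSeq N) ≤ ST6psi j - ST6psi N := by
  rw [← tele (fun i => Real.log (stirlingSeq i)) hN, ← tele ST6psi hN]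
  refine Finset.sum_le_sum (fun i hi => ?_)
  have hi1 : 1 ≤ i := le_trans hj (Finset.mem_Ico.1 hi).1
  obtain ⟨mi, rfl⟩ : ∃ m, i = m + 1 := ⟨i - 1, by omega⟩
  exact du_le mi

lemma partialL {j N : ℕ} (hj : 1 ≤ j) (hN : j ≤ N) :
    ST6chi j - ST6chi N ≤ Real.log (stirlingSeq j) - Real.log (stirlingSeq N) := by
  rw [← tele (fun i => Real.log (stirlingSeq i)) hN, ← tele ST6chi hN]
  refine Finset.sum_le_sum (fun i hi => ?_)
  have hi1 : 1 ≤ i := le_trans hj (Finset.mem_Ico.1 hi).1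
  obtain ⟨mi, rfl⟩ : ∃ m, i = m + 1 := ⟨i - 1, by omega⟩
  exact du_ge mi

lemma tendsto_aux (c : ℝ) (hc0 : 0 ≤ c) (hc1 : c ≤ 1) :
    Tendsto (fun N : ℕ => 1/(12*(N:ℝ)) - c/(2*(N:ℝ)+1)^3) atTop (𝓝 0) := by
  have h1 : Tendsto (fun N : ℕ => 1/(N:ℝ)) atTop (𝓝 0) := tendsto_one_div_atTop_nhds_zero_nat
  have h2 : Tendsto (fun N : ℕ => -(1/(N:ℝ))) atTop (𝓝 0) := by simpa using h1.neg
  refine tendsto_of_tendsto_of_tendsto_of_le_of_le' h2 h1 ?_ ?_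
  · filter_upwards [eventually_ge_atTop 1] with N hN
    have hN' : (1:ℝ) ≤ (N:ℝ) := by exact_mod_cast hN
    have hpos : (0:ℝ) < (N:ℝ) := by linarith
    have : c/(2*(N:ℝ)+1)^3 ≤ 1/(N:ℝ) := by
      rw [div_le_div_iff₀ (by positivity) hpos]
      nlinarith [pow_pos hpos 2, pow_pos hpos 3]
    have h12 : 0 ≤ 1/(12*(N:ℝ)) := by positivity
    linarith
  · filter_upwards [eventually_ge_atTop 1] with N hN
    have hN' : (1:ℝ) ≤ (N:ℝ) := by exact_mod_cast hN
    have hpos : (0:ℝ) < (N:ℝ) := by linarith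
    have h1' : 1/(12*(N:ℝ)) ≤ 1/(N:ℝ) := by
      rw [div_le_div_iff₀ (by positivity) hpos]; linarith
    have : 0 ≤ c/(2*(N:ℝ)+1)^3 := by positivity
    linarith

lemma log_s_tendsto : Tendsto (fun N : ℕ => Real.log (stirlingSeq N)) atTop (𝓝 (Real.log (Real.sqrt π))) :=
  tendsto_stirlingSeq_sqrt_pi.log (by positivity)

lemma rr_le {j : ℕ} (hj : 1 ≤ j) :
    Real.log (stirlingSeq j) - Real.log (Real.sqrt π) ≤ ST6psi j := by
  have hlim : Tendsto (fun N : ℕ => Real.log (stirlingSeq j) - Real.log (stirlingSeq N)) atTop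
      (𝓝 (Real.log (stirlingSeq j) - Real.log (Real.sqrt π))) := tendsto_const_nhds.sub log_s_tendsto
  have hlim2 : Tendsto (fun N : ℕ => ST6psi j - ST6psi N) atTop (𝓝 (ST6psi j - 0)) :=
    tendsto_const_nhds.sub ((tendsto_aux (1/45) (by norm_num) (by norm_num)).congr (fun N => rfl))
  have := le_of_tendsto_of_tendsto hlim hlim2
    (eventually_atTop.2 ⟨j, fun N hN => partialU hj hN⟩)
  simpa using this

lemma rr_ge {j : ℕ} (hj : 1 ≤ j) :
    ST6chi j ≤ Real.log (stirlingSeq j) - Real.log (Real.sqrt π) := by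
  have hlim : Tendsto (fun N : ℕ => Real.log (stirlingSeq j) - Real.log (stirlingSeq N)) atTop
      (𝓝 (Real.log (stirlingSeq j) - Real.log (Real.sqrt π))) := tendsto_const_nhds.sub log_s_tendsto
  have hlim2 : Tendsto (fun N : ℕ => ST6chi j - ST6chi N) atTop (𝓝 (ST6chi j - 0)) :=
    tendsto_const_nhds.sub ((tendsto_aux (7/80) (by norm_num) (by norm_num)).congr (fun N => rfl))
  have := le_of_tendsto_of_tendsto hlim2 hlim
    (eventually_atTop.2 ⟨j, fun N hN => partialL hj hN⟩)
  simpa using this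

lemma combU_real (L M K : ℝ) (hL : 1 ≤ L) (hM : 1 ≤ M) (hK : 1 ≤ K)
    (hcase : (M = 1 ∧ K = 1) ∨ 3 ≤ M + K) :
    (1/(12*(M*L)) - (1/45)/(2*(M*L)+1)^3) + (1/(12*(K*L)) - (1/45)/(2*(K*L)+1)^3)
      - (1/(12*((M+K)*L)) - (7/80)/(2*((M+K)*L)+1)^3) < 1/(8*L) := by
  have hL0 : (0:ℝ) < L := by linarith
  have hM0 : (0:ℝ) < M := by linarith
  have hK0 : (0:ℝ) < K := by linarith
  rcases hcase with ⟨rfl, rfl⟩ | h3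
  · have e : 1/(12*(1*L)) + 1/(12*(1*L)) - 1/(12*((1+1)*L)) = 1/(8*L) := by
      field_simp; ring
    have hcube : (7/80)/(2*((1+1)*L)+1)^3 < 2*((1/45)/(2*(1*L)+1)^3) := by
      rw [show 2*((1/45)/(2*(1*L)+1)^3) = (2/45)/(2*(1*L)+1)^3 by ring]
      rw [div_lt_div_iff₀ (by positivity) (by positivity)]
      nlinarith [pow_pos hL0 2, pow_pos hL0 3]
    linarith [hcube, e]
  · -- general case
    have hN0 : (0:ℝ) < M + K := by linarith
    have h76 : 1/(12*(M*L)) + 1/(12*(K*L)) - 1/(12*((M+K)*L)) ≤ 7/(72*L) := by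
      rw [← sub_nonneg]
      have e : 7/(72*L) - (1/(12*(M*L)) + 1/(12*(K*L)) - 1/(12*((M+K)*L)))
          = (7*M*K*(M+K) - 6*(M^2+M*K+K^2)) / (72*L*(M*K*(M+K))) := by
        field_simp; ring
      rw [e]
      apply div_nonneg _ (by positivity)
      nlinarith [mul_nonneg (sub_nonneg.2 hM) (sub_nonneg.2 hK),
        mul_nonneg (mul_nonneg (sub_nonneg.2 hM) (sub_nonneg.2 hK)) hN0.le,
        mul_nonneg (sub_nonneg.2 (by linarith : (3:ℝ) ≤ M + K)) (mul_pos hM0 hK0).le]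
    have hcube : (7/80)/(2*((M+K)*L)+1)^3 ≤ 7/(17280*L) := by
      rw [div_le_div_iff₀ (by positivity) (by positivity)]
      have h6L : 6*L ≤ 2*((M+K)*L) := by nlinarith
      have : (6*L)^3 ≤ (2*((M+K)*L)+1)^3 := by
        apply pow_le_pow_left₀ (by positivity) (by linarith)
      nlinarith [pow_pos hL0 3, pow_pos hL0 2]
    have hd1 : (0:ℝ) ≤ (1/45)/(2*(M*L)+1)^3 := by positivity
    have hd2 : (0:ℝ) ≤ (1/45)/(2*(K*L)+1)^3 := by positivity
    have hfin : 7/(72*L) + 7/(17280*L) < 1/(8*L) := by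
      rw [div_add_div _ _ (by positivity) (by positivity), div_lt_div_iff₀ (by positivity) (by positivity)]
      nlinarith [pow_pos hL0 2]
    linarith

lemma combL_real (L M K : ℝ) (hL : 1 ≤ L) (hM : 1 ≤ M) (hK : 1 ≤ K) :
    0 < (1/(12*(M*L)) - (7/80)/(2*(M*L)+1)^3) + (1/(12*(K*L)) - (7/80)/(2*(K*L)+1)^3)
      - (1/(12*((M+K)*L)) - (1/45)/(2*((M+K)*L)+1)^3) := by
  have hL0 : (0:ℝ) < L := by linarith
  have hM0 : (0:ℝ) < M := by linarith
  have hK0 : (0:ℝ) < K := by linarith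
  have hN0 : (0:ℝ) < M + K := by linarith
  have h1 : (0:ℝ) < 1/(12*(K*L)) - (7/80)/(2*(K*L)+1)^3 := by
    rw [sub_pos, div_lt_div_iff₀ (by positivity) (by positivity)]
    nlinarith [pow_pos (mul_pos hK0 hL0) 3, pow_pos (mul_pos hK0 hL0) 2,
      mul_pos hK0 hL0, one_le_mul_of_one_le_of_one_le hK hL]
  have h2 : (0:ℝ) ≤ 1/(12*(M*L)) - 1/(12*((M+K)*L)) - (7/80)/(2*(M*L)+1)^3 := by
    have e : 1/(12*(M*L)) - 1/(12*((M+K)*L)) = K/(12*(M*(M+K)*L)) := by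
      field_simp; ring
    rw [show 1/(12*(M*L)) - 1/(12*((M+K)*L)) - (7/80)/(2*(M*L)+1)^3
        = K/(12*(M*(M+K)*L)) - (7/80)/(2*(M*L)+1)^3 from by rw [e]]
    have e2 : K/(12*(M*(M+K)*L)) - (7/80)/(2*(M*L)+1)^3
        = (80*K*(2*(M*L)+1)^3 - 84*(M*(M+K)*L)) / (960*(M*(M+K)*L)*(2*(M*L)+1)^3) := by
      field_simp; ring
    rw [e2]
    apply div_nonneg _ (by positivity)
    have hML : (1:ℝ) ≤ M*L := one_le_mul_of_one_le_of_one_le hM hL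
    nlinarith [pow_pos (mul_pos hM0 hL0) 3, mul_pos hM0 hL0, sq_nonneg (M*L),
      mul_nonneg (mul_nonneg hK0.le (sq_nonneg (M*L))) (sub_nonneg.2 hML),
      mul_nonneg (mul_nonneg (mul_nonneg hK0.le hM0.le) hL0.le) (sub_nonneg.2 hML),
      mul_nonneg (mul_nonneg hK0.le hM0.le) hL0.le,
      mul_nonneg (mul_nonneg (sub_nonneg.2 hK) hM0.le) hL0.le]
  have h3 : (0:ℝ) ≤ (1/45)/(2*((M+K)*L)+1)^3 := by positivity
  linarith

lemma fact_eq {j : ℕ} (hj : 1 ≤ j) :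
    (Nat.factorial j : ℝ) = stirlingSeq j * (Real.sqrt (2*j) * ((j:ℝ)/Real.exp 1)^j) := by
  have hj0 : (0:ℝ) < j := by exact_mod_cast hj
  have hD : (0:ℝ) < Real.sqrt (2*j) * ((j:ℝ)/Real.exp 1)^j := by positivity
  rw [stirlingSeq, div_mul_cancel₀]
  exact hD.ne'

lemma exp_rr {a b c : ℕ} (ha : 1 ≤ a) (hb : 1 ≤ b) (hc : 1 ≤ c) :
    Real.exp ((Real.log (stirlingSeq a) - Real.log (Real.sqrt π))
      - (Real.log (stirlingSeq b) - Real.log (Real.sqrt π))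
      - (Real.log (stirlingSeq c) - Real.log (Real.sqrt π)))
    = stirlingSeq a * Real.sqrt π / (stirlingSeq b * stirlingSeq c) := by
  obtain ⟨a', rfl⟩ : ∃ x, a = x + 1 := ⟨a - 1, by omega⟩
  obtain ⟨b', rfl⟩ : ∃ x, b = x + 1 := ⟨b - 1, by omega⟩
  obtain ⟨c', rfl⟩ : ∃ x, c = x + 1 := ⟨c - 1, by omega⟩
  have h1 := stirlingSeq'_pos a'
  have h2 := stirlingSeq'_pos b'
  have h3 := stirlingSeq'_pos c'
  have hπ : (0:ℝ) < Real.sqrt π := Real.sqrt_pos.2 pi_pos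
  rw [show (Real.log (stirlingSeq (a'+1)) - Real.log (Real.sqrt π))
      - (Real.log (stirlingSeq (b'+1)) - Real.log (Real.sqrt π))
      - (Real.log (stirlingSeq (c'+1)) - Real.log (Real.sqrt π))
      = (Real.log (stirlingSeq (a'+1)) + Real.log (Real.sqrt π))
        - Real.log (stirlingSeq (b'+1)) - Real.log (stirlingSeq (c'+1)) by ring]
  rw [Real.exp_sub, Real.exp_sub, Real.exp_add, Real.exp_log h1, Real.exp_log h2,
    Real.exp_log h3, Real.exp_log hπ]
  field_simp

lemma SQpart (ℓ m k : ℕ) (hℓ : 1 ≤ ℓ) (hm : 1 ≤ m) (hk : 1 ≤ k) :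
    Real.sqrt (2*((((m+k)*ℓ:ℕ)):ℝ)) / (Real.sqrt (2*(((m*ℓ:ℕ)):ℝ)) * Real.sqrt (2*(((k*ℓ:ℕ)):ℝ)))
    = Real.sqrt π * ((Real.sqrt (2*π))⁻¹ * (Real.sqrt (ℓ:ℝ))⁻¹ *
        Real.sqrt (((m+k:ℕ):ℝ) / (((k:ℕ):ℝ) * ((m:ℕ):ℝ)))) := by
  have hL0 : (0:ℝ) < ℓ := by exact_mod_cast hℓ
  have hM0 : (0:ℝ) < m := by exact_mod_cast hm
  have hK0 : (0:ℝ) < k := by exact_mod_cast hk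
  have hπ := pi_pos
  push_cast
  rw [← Real.sqrt_inv (2*π), ← Real.sqrt_inv (ℓ:ℝ)]
  rw [← Real.sqrt_mul (by positivity : (0:ℝ) ≤ (2*π)⁻¹)]
  rw [← Real.sqrt_mul (by positivity : (0:ℝ) ≤ (2*π)⁻¹ * (↑ℓ)⁻¹)]
  rw [← Real.sqrt_mul pi_pos.le]
  rw [← Real.sqrt_mul (by positivity : (0:ℝ) ≤ 2*((m:ℝ)*↑ℓ))]
  rw [← Real.sqrt_div (by positivity : (0:ℝ) ≤ 2*(((m:ℝ)+↑k)*↑ℓ))]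
  congr 1
  field_simp

lemma PWpart (ℓ m k : ℕ) (hℓ : 1 ≤ ℓ) (hm : 1 ≤ m) (hk : 1 ≤ k) :
    ((((m+k)*ℓ:ℕ):ℝ)/Real.exp 1)^((m+k)*ℓ)
      / ( (((m*ℓ:ℕ):ℝ)/Real.exp 1)^(m*ℓ) * ((((k*ℓ:ℕ)):ℝ)/Real.exp 1)^(k*ℓ) )
    = (((m+k:ℕ):ℝ)^(m+k) / (((k:ℕ):ℝ)^k * ((m:ℕ):ℝ)^m))^ℓ := by
  have hL0 : (0:ℝ) < ℓ := by exact_mod_cast hℓ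
  have hM0 : (0:ℝ) < m := by exact_mod_cast hm
  have hK0 : (0:ℝ) < k := by exact_mod_cast hk
  have he : Real.exp 1 ≠ 0 := (Real.exp_pos 1).ne'
  push_cast
  rw [div_pow, div_pow, div_pow, div_pow]
  rw [mul_pow ((m:ℝ)+(k:ℝ)) (ℓ:ℝ), mul_pow ((m:ℝ)) (ℓ:ℝ), mul_pow ((k:ℝ)) (ℓ:ℝ),
    mul_pow ((k:ℝ)^k) ((m:ℝ)^m), ← pow_mul ((m:ℝ)+(k:ℝ)), ← pow_mul ((k:ℝ)),
    ← pow_mul ((m:ℝ))]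
  rw [show (m+k)*ℓ = m*ℓ + k*ℓ from by ring, show k*ℓ = ℓ*k from by ring,
    show m*ℓ = ℓ*m from by ring]
  field_simp
  ring

lemma combU_nat (ℓ m k : ℕ) (hℓ : 1 ≤ ℓ) (hm : 1 ≤ m) (hk : 1 ≤ k) :
    ST6psi (m*ℓ) + ST6psi (k*ℓ) - ST6chi ((m+k)*ℓ) < 1/(8*(ℓ:ℝ)) := by
  have hL : (1:ℝ) ≤ ℓ := by exact_mod_cast hℓ
  have hM : (1:ℝ) ≤ m := by exact_mod_cast hm
  have hK : (1:ℝ) ≤ k := by exact_mod_cast hk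
  have hcase : ((m:ℝ) = 1 ∧ (k:ℝ) = 1) ∨ 3 ≤ (m:ℝ) + (k:ℝ) := by
    rcases Nat.lt_or_ge (m+k) 3 with h | h
    · left
      constructor
      · have : m = 1 := by omega
        rw [this]; norm_num
      · have : k = 1 := by omega
        rw [this]; norm_num
    · right
      have : (3:ℝ) ≤ ((m+k:ℕ):ℝ) := by exact_mod_cast h
      push_cast at this; linarith
  have h := combU_real ℓ m k hL hM hK hcase
  rw [ST6psi, ST6psi, ST6chi]
  push_cast
  convert h using 3 <;> ring

lemma combL_nat (ℓ m k : ℕ) (hℓ : 1 ≤ ℓ) (hm : 1 ≤ m) (hk : 1 ≤ k) :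
    0 < ST6chi (m*ℓ) + ST6chi (k*ℓ) - ST6psi ((m+k)*ℓ) := by
  have hL : (1:ℝ) ≤ ℓ := by exact_mod_cast hℓ
  have hM : (1:ℝ) ≤ m := by exact_mod_cast hm
  have hK : (1:ℝ) ≤ k := by exact_mod_cast hk
  have h := combL_real ℓ m k hL hM hK
  rw [ST6chi, ST6chi, ST6psi]
  push_cast
  convert h using 3 <;> ring

lemma spos {j : ℕ} (hj : 1 ≤ j) : 0 < stirlingSeq j := by
  obtain ⟨x, rfl⟩ : ∃ x, j = x + 1 := ⟨j - 1, by omega⟩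
  exact stirlingSeq'_pos x

/-- Stirling-type two-sided bound: for positive integers `ℓ, m, n` with `n > m`,
`e^{-1/(8ℓ)}·a < C(nℓ, mℓ) < a`, where
`a = (2π)^{-1/2}·ℓ^{-1/2}·(n/((n-m)m))^{1/2}·(nⁿ/((n-m)^{n-m}·mᵐ))^ℓ`. -/
theorem stmt6 (ℓ m n : ℕ) (hℓ : 0 < ℓ) (hm : 0 < m) (hmn : m < n) :
    Real.exp (-1 / (8 * (ℓ : ℝ))) *
        ((Real.sqrt (2 * Real.pi))⁻¹ * (Real.sqrt (ℓ : ℝ))⁻¹ *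
          Real.sqrt ((n : ℝ) / (((n - m : ℕ) : ℝ) * (m : ℝ))) *
          ((n : ℝ) ^ n / (((n - m : ℕ) : ℝ) ^ (n - m) * (m : ℝ) ^ m)) ^ ℓ) <
      ((n * ℓ).choose (m * ℓ) : ℝ) ∧
    ((n * ℓ).choose (m * ℓ) : ℝ) <
      (Real.sqrt (2 * Real.pi))⁻¹ * (Real.sqrt (ℓ : ℝ))⁻¹ *
        Real.sqrt ((n : ℝ) / (((n - m : ℕ) : ℝ) * (m : ℝ))) *
        ((n : ℝ) ^ n / (((n - m : ℕ) : ℝ) ^ (n - m) * (m : ℝ) ^ m)) ^ ℓ := by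
  obtain ⟨k, hk1, rfl⟩ : ∃ k, 1 ≤ k ∧ n = m + k := ⟨n - m, by omega, by omega⟩
  have hsubk : m + k - m = k := by omega
  rw [hsubk]
  have hℓ1 : 1 ≤ ℓ := hℓ
  have hm1 : 1 ≤ m := hm
  have hmℓ : 1 ≤ m*ℓ := Nat.one_le_iff_ne_zero.2 (Nat.mul_ne_zero (by omega) (by omega))
  have hkℓ : 1 ≤ k*ℓ := Nat.one_le_iff_ne_zero.2 (Nat.mul_ne_zero (by omega) (by omega))
  have hnℓ : 1 ≤ (m+k)*ℓ := Nat.one_le_iff_ne_zero.2 (Nat.mul_ne_zero (by omega) (by omega))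
  have hM0 : (0:ℝ) < m := by exact_mod_cast hm
  have hK0 : (0:ℝ) < k := by exact_mod_cast hk1
  have hL0 : (0:ℝ) < ℓ := by exact_mod_cast hℓ
  have hN0 : (0:ℝ) < ((m+k:ℕ):ℝ) := by exact_mod_cast (by omega : 0 < m + k)
  have hπ := Real.pi_pos
  set A : ℝ := (Real.sqrt (2 * π))⁻¹ * (Real.sqrt (ℓ : ℝ))⁻¹ *
        Real.sqrt (((m+k:ℕ):ℝ) / ((k : ℝ) * (m : ℝ))) *
        (((m+k:ℕ):ℝ) ^ (m+k) / ((k : ℝ) ^ k * (m : ℝ) ^ m)) ^ ℓ with hAdef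
  have hA : 0 < A := by
    apply mul_pos (mul_pos (mul_pos _ _) _) _
    · exact inv_pos.2 (Real.sqrt_pos.2 (by positivity))
    · exact inv_pos.2 (Real.sqrt_pos.2 hL0)
    · exact Real.sqrt_pos.2 (div_pos hN0 (by positivity))
    · exact pow_pos (div_pos (pow_pos hN0 _) (by positivity)) _
  -- factorial identity
  have hle : m*ℓ ≤ (m+k)*ℓ := Nat.mul_le_mul_right _ (by omega)
  have hsub : (m+k)*ℓ - m*ℓ = k*ℓ := by
    rw [← Nat.sub_mul, hsubk]
  have hfacN : ((m+k)*ℓ).choose (m*ℓ) * Nat.factorial (m*ℓ) * Nat.factorial (k*ℓ)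
      = Nat.factorial ((m+k)*ℓ) := by
    rw [← hsub]
    exact Nat.choose_mul_factorial_mul_factorial hle
  have hfac : ((((m+k)*ℓ).choose (m*ℓ) : ℝ)) * (Nat.factorial (m*ℓ) : ℝ) * (Nat.factorial (k*ℓ) : ℝ)
      = (Nat.factorial ((m+k)*ℓ) : ℝ) := by exact_mod_cast congrArg (Nat.cast (R := ℝ)) hfacN
  have hCval : ((((m+k)*ℓ).choose (m*ℓ)) : ℝ)
      = (Nat.factorial ((m+k)*ℓ) : ℝ) / ((Nat.factorial (m*ℓ) : ℝ) * (Nat.factorial (k*ℓ) : ℝ)) := by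
    rw [eq_div_iff (by positivity)]
    rw [← hfac]; ring
  have hsm := spos hmℓ
  have hsk := spos hkℓ
  have hsn := spos hnℓ
  have hsπ : (0:ℝ) < Real.sqrt π := Real.sqrt_pos.2 hπ
  set Δ : ℝ := (Real.log (stirlingSeq ((m+k)*ℓ)) - Real.log (Real.sqrt π))
      - (Real.log (stirlingSeq (m*ℓ)) - Real.log (Real.sqrt π))
      - (Real.log (stirlingSeq (k*ℓ)) - Real.log (Real.sqrt π)) with hΔdef
  have hC : ((((m+k)*ℓ).choose (m*ℓ)) : ℝ) = Real.exp Δ * A := by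
    rw [hCval, hΔdef, exp_rr hnℓ hmℓ hkℓ]
    rw [fact_eq hnℓ, fact_eq hmℓ, fact_eq hkℓ]
    have SQ := SQpart ℓ m k hℓ1 hm1 hk1
    have PW := PWpart ℓ m k hℓ1 hm1 hk1
    have hq1 : (0:ℝ) < Real.sqrt (2*(((m*ℓ:ℕ)):ℝ)) := Real.sqrt_pos.2 (by positivity)
    have hq2 : (0:ℝ) < Real.sqrt (2*(((k*ℓ:ℕ)):ℝ)) := Real.sqrt_pos.2 (by positivity)
    have hp1 : (0:ℝ) < (((m*ℓ:ℕ):ℝ)/Real.exp 1)^(m*ℓ) := by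
      apply pow_pos (div_pos _ (Real.exp_pos 1))
      exact_mod_cast hmℓ
    have hp2 : (0:ℝ) < ((((k*ℓ:ℕ)):ℝ)/Real.exp 1)^(k*ℓ) := by
      apply pow_pos (div_pos _ (Real.exp_pos 1))
      exact_mod_cast hkℓ
    calc stirlingSeq ((m+k)*ℓ) * (Real.sqrt (2*(((m+k)*ℓ:ℕ):ℝ)) * ((((m+k)*ℓ:ℕ):ℝ)/Real.exp 1)^((m+k)*ℓ))
          / (stirlingSeq (m*ℓ) * (Real.sqrt (2*((m*ℓ:ℕ):ℝ)) * (((m*ℓ:ℕ):ℝ)/Real.exp 1)^(m*ℓ))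
            * (stirlingSeq (k*ℓ) * (Real.sqrt (2*((k*ℓ:ℕ):ℝ)) * (((k*ℓ:ℕ):ℝ)/Real.exp 1)^(k*ℓ))))
        = (stirlingSeq ((m+k)*ℓ) / (stirlingSeq (m*ℓ) * stirlingSeq (k*ℓ)))
          * ((Real.sqrt (2*(((m+k)*ℓ:ℕ):ℝ)) / (Real.sqrt (2*((m*ℓ:ℕ):ℝ)) * Real.sqrt (2*((k*ℓ:ℕ):ℝ))))
          * (((((m+k)*ℓ:ℕ):ℝ)/Real.exp 1)^((m+k)*ℓ)
            / ( (((m*ℓ:ℕ):ℝ)/Real.exp 1)^(m*ℓ) * ((((k*ℓ:ℕ)):ℝ)/Real.exp 1)^(k*ℓ) ))) := by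
          field_simp
      _ = (stirlingSeq ((m+k)*ℓ) / (stirlingSeq (m*ℓ) * stirlingSeq (k*ℓ)))
          * ((Real.sqrt π * ((Real.sqrt (2*π))⁻¹ * (Real.sqrt (ℓ:ℝ))⁻¹ *
              Real.sqrt (((m+k:ℕ):ℝ) / ((k:ℝ) * (m:ℝ)))))
            * ((((m+k:ℕ):ℝ)^(m+k) / ((k:ℝ)^k * (m:ℝ)^m))^ℓ)) := by
          rw [SQ, PW]
      _ = stirlingSeq ((m+k)*ℓ) * Real.sqrt π / (stirlingSeq (m*ℓ) * stirlingSeq (k*ℓ)) * A := by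
          rw [hAdef]; field_simp
  have hrm_le := rr_le hmℓ
  have hrk_le := rr_le hkℓ
  have hrn_le := rr_le hnℓ
  have hrm_ge := rr_ge hmℓ
  have hrk_ge := rr_ge hkℓ
  have hrn_ge := rr_ge hnℓ
  have hU := combU_nat ℓ m k hℓ1 hm1 hk1
  have hLo := combL_nat ℓ m k hℓ1 hm1 hk1
  constructor
  · rw [hC]
    apply mul_lt_mul_of_pos_right _ hA
    apply Real.exp_lt_exp.2
    rw [hΔdef]
    have : -1 / (8 * (ℓ:ℝ)) = -(1/(8*(ℓ:ℝ))) := by ring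
    rw [this]
    linarith
  · rw [hC]
    calc Real.exp Δ * A < 1 * A := by
          apply mul_lt_mul_of_pos_right _ hA
          apply Real.exp_lt_one_iff.2 ?_
          rw [hΔdef]
          linarith
      _ = A := one_mul A
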